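/- For every y > 0, one has y^2 · ϑ₄'(y)/ϑ₄(y) = 2 y^2 ∑_{n=1}^{∞} ( nπ/(e^{2nπy} − 1) + (2n−1)π/(e^{(2n−1)πy} − 1) ). -/

import Mathlib

open Finset Filter Topology Real

/-- Partial products of `∏ (1 - q^{2i+2})`. -/
noncomputable def jtpD (q : ℝ) (m : ℕ) : ℝ := ∏ i ∈ Finset.range m, (1 - (q ^ 2) ^ (i + 1))

/-- Gaussian binomial coefficients (base `q^2`), zero-extended to `ℤ` indices. -/
noncomputable def jtpB (q : ℝ) (n : ℕ) (k : ℤ) : ℝ :=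
  if 0 ≤ k ∧ k ≤ (n : ℤ) then jtpD q n / (jtpD q k.toNat * jtpD q (n - k.toNat)) else 0

section basic

variable {q : ℝ}

lemma jtp_fac_pos (hq0 : 0 < q) (hq1 : q < 1) (m : ℕ) : 0 < 1 - (q ^ 2) ^ (m + 1) := by
  have h0 : 0 < q ^ 2 := pow_pos hq0 2
  have h2 : q ^ 2 < 1 := by nlinarith
  have h1 : (q ^ 2) ^ (m + 1) < 1 := pow_lt_one₀ (le_of_lt h0) h2 (Nat.succ_ne_zero m)
  linarith

lemma jtpD_pos (hq0 : 0 < q) (hq1 : q < 1) (m : ℕ) : 0 < jtpD q m := by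
  refine Finset.prod_pos fun i _ => jtp_fac_pos hq0 hq1 i

lemma jtpD_le_one (hq0 : 0 < q) (hq1 : q < 1) (m : ℕ) : jtpD q m ≤ 1 := by
  refine Finset.prod_le_one (fun i _ => le_of_lt (jtp_fac_pos hq0 hq1 i)) fun i _ => ?_
  have : 0 < (q ^ 2) ^ (i + 1) := pow_pos (pow_pos hq0 2) _
  linarith

lemma jtpD_succ {m : ℕ} : jtpD q (m + 1) = jtpD q m * (1 - (q ^ 2) ^ (m + 1)) :=
  Finset.prod_range_succ _ m

lemma jtpD_zero : jtpD q 0 = 1 := Finset.prod_range_zero _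

lemma jtpB_neg {n : ℕ} {k : ℤ} (hk : k < 0) : jtpB q n k = 0 := by
  rw [jtpB, if_neg]; rintro ⟨h1, -⟩; omega

lemma jtpB_gt {n : ℕ} {k : ℤ} (hk : (n : ℤ) < k) : jtpB q n k = 0 := by
  rw [jtpB, if_neg]; rintro ⟨-, h2⟩; omega

lemma jtpB_zero (hq0 : 0 < q) (hq1 : q < 1) (n : ℕ) : jtpB q n 0 = 1 := by
  rw [jtpB, if_pos ⟨le_refl 0, by exact_mod_cast Nat.zero_le n⟩]
  simp only [Int.toNat_zero, jtpD_zero, Nat.sub_zero, one_mul]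
  exact div_self (ne_of_gt (jtpD_pos hq0 hq1 n))

lemma jtpB_self (hq0 : 0 < q) (hq1 : q < 1) (n : ℕ) : jtpB q n ↑n = 1 := by
  rw [jtpB, if_pos ⟨by positivity, le_refl _⟩]
  simp only [Int.toNat_natCast, Nat.sub_self, jtpD_zero, mul_one]
  exact div_self (ne_of_gt (jtpD_pos hq0 hq1 n))

lemma jtpB_nat (n a : ℕ) (ha : a ≤ n) :
    jtpB q n (a : ℤ) = jtpD q n / (jtpD q a * jtpD q (n - a)) := by
  rw [jtpB, if_pos ⟨by positivity, by exact_mod_cast ha⟩, Int.toNat_natCast]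

lemma jtpB_pascal1 (hq0 : 0 < q) (hq1 : q < 1) (n : ℕ) (k : ℤ) :
    jtpB q (n + 1) k = jtpB q n (k - 1) + (q ^ 2) ^ k * jtpB q n k := by
  rcases lt_or_ge k 0 with hk | hk
  · rw [jtpB_neg hk, jtpB_neg (by omega), jtpB_neg hk, mul_zero, add_zero]
  rcases eq_or_lt_of_le hk with hk0 | hkpos
  · subst k
    rw [jtpB_zero hq0 hq1, jtpB_zero hq0 hq1, jtpB_neg (by omega), zpow_zero, one_mul, zero_add]
  rcases lt_or_ge (n : ℤ) k with hkn | hkn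
  · rcases eq_or_lt_of_le (by omega : (n : ℤ) + 1 ≤ k) with hk1 | hk1
    · have hkk : k = ((n + 1 : ℕ) : ℤ) := by push_cast; omega
      subst hkk
      rw [jtpB_self hq0 hq1, jtpB_gt hkn, mul_zero, add_zero,
        show ((n + 1 : ℕ) : ℤ) - 1 = (n : ℤ) by push_cast; ring, jtpB_self hq0 hq1]
    · rw [jtpB_gt (by exact_mod_cast hk1), jtpB_gt hkn, jtpB_gt (by omega), mul_zero, add_zero]
  -- main case : 1 ≤ k ≤ n
  obtain ⟨a, rfl⟩ : ∃ a : ℕ, k = (a : ℤ) := ⟨k.toNat, (Int.toNat_of_nonneg hk).symm⟩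
  have ha1 : 1 ≤ a := by exact_mod_cast hkpos
  have han : a ≤ n := by exact_mod_cast hkn
  have e1 : (a : ℤ) - 1 = ((a - 1 : ℕ) : ℤ) := by omega
  rw [e1, jtpB_nat (n + 1) a (by omega), jtpB_nat n (a - 1) (by omega),
    jtpB_nat n a han, zpow_natCast]
  have h2 : jtpD q a = jtpD q (a - 1) * (1 - (q ^ 2) ^ a) := by
    have := jtpD_succ (q := q) (m := a - 1)
    rwa [show a - 1 + 1 = a by omega] at this
  have h3 : jtpD q (n + 1 - a) = jtpD q (n - a) * (1 - (q ^ 2) ^ (n + 1 - a)) := by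
    have := jtpD_succ (q := q) (m := n - a)
    rwa [show n - a + 1 = n + 1 - a by omega] at this
  have key : (q ^ 2) ^ (n + 1) = (q ^ 2) ^ a * (q ^ 2) ^ (n + 1 - a) := by
    rw [← pow_add]; congr 1; omega
  have hrw : n - (a - 1) = n + 1 - a := by omega
  rw [jtpD_succ, h2, h3, key, hrw, h3]
  have pA : (0:ℝ) < jtpD q (a - 1) := jtpD_pos hq0 hq1 _
  have pB : (0:ℝ) < jtpD q (n - a) := jtpD_pos hq0 hq1 _
  have pD : (0:ℝ) < jtpD q n := jtpD_pos hq0 hq1 _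
  have px : (0:ℝ) < 1 - (q ^ 2) ^ a := by
    have := jtp_fac_pos hq0 hq1 (a - 1); rwa [show a - 1 + 1 = a by omega] at this
  have pz : (0:ℝ) < 1 - (q ^ 2) ^ (n + 1 - a) := by
    have := jtp_fac_pos hq0 hq1 (n - a); rwa [show n - a + 1 = n + 1 - a by omega] at this
  field_simp
  ring

lemma jtpB_pascal2 (hq0 : 0 < q) (hq1 : q < 1) (n : ℕ) (k : ℤ) :
    jtpB q (n + 1) k = (q ^ 2) ^ ((n : ℤ) + 1 - k) * jtpB q n (k - 1) + jtpB q n k := by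
  rcases lt_or_ge k 0 with hk | hk
  · rw [jtpB_neg hk, jtpB_neg (by omega), jtpB_neg hk, mul_zero, add_zero]
  rcases eq_or_lt_of_le hk with hk0 | hkpos
  · subst k
    rw [jtpB_zero hq0 hq1, jtpB_zero hq0 hq1, jtpB_neg (by omega), mul_zero, zero_add]
  rcases lt_or_ge (n : ℤ) k with hkn | hkn
  · rcases eq_or_lt_of_le (by omega : (n : ℤ) + 1 ≤ k) with hk1 | hk1
    · have hkk : k = ((n + 1 : ℕ) : ℤ) := by push_cast; omega
      subst hkk
      rw [jtpB_self hq0 hq1, jtpB_gt hkn, add_zero,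
        show ((n + 1 : ℕ) : ℤ) - 1 = (n : ℤ) by push_cast; ring, jtpB_self hq0 hq1,
        show (n : ℤ) + 1 - ((n + 1 : ℕ) : ℤ) = 0 by push_cast; ring, zpow_zero]
      norm_num
    · rw [jtpB_gt (by exact_mod_cast hk1), jtpB_gt hkn, jtpB_gt (by omega), mul_zero, add_zero]
  obtain ⟨a, rfl⟩ : ∃ a : ℕ, k = (a : ℤ) := ⟨k.toNat, (Int.toNat_of_nonneg hk).symm⟩
  have ha1 : 1 ≤ a := by exact_mod_cast hkpos
  have han : a ≤ n := by exact_mod_cast hkn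
  have e1 : (a : ℤ) - 1 = ((a - 1 : ℕ) : ℤ) := by omega
  have e2 : (n : ℤ) + 1 - (a : ℤ) = ((n + 1 - a : ℕ) : ℤ) := by omega
  rw [e1, e2, jtpB_nat (n + 1) a (by omega), jtpB_nat n (a - 1) (by omega),
    jtpB_nat n a han, zpow_natCast]
  have h2 : jtpD q a = jtpD q (a - 1) * (1 - (q ^ 2) ^ a) := by
    have := jtpD_succ (q := q) (m := a - 1)
    rwa [show a - 1 + 1 = a by omega] at this
  have h3 : jtpD q (n + 1 - a) = jtpD q (n - a) * (1 - (q ^ 2) ^ (n + 1 - a)) := by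
    have := jtpD_succ (q := q) (m := n - a)
    rwa [show n - a + 1 = n + 1 - a by omega] at this
  have key : (q ^ 2) ^ (n + 1) = (q ^ 2) ^ a * (q ^ 2) ^ (n + 1 - a) := by
    rw [← pow_add]; congr 1; omega
  have hrw : n - (a - 1) = n + 1 - a := by omega
  rw [jtpD_succ, h2, h3, key, hrw, h3]
  have pA : (0:ℝ) < jtpD q (a - 1) := jtpD_pos hq0 hq1 _
  have pB : (0:ℝ) < jtpD q (n - a) := jtpD_pos hq0 hq1 _
  have pD : (0:ℝ) < jtpD q n := jtpD_pos hq0 hq1 _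
  have px : (0:ℝ) < 1 - (q ^ 2) ^ a := by
    have := jtp_fac_pos hq0 hq1 (a - 1); rwa [show a - 1 + 1 = a by omega] at this
  have pz : (0:ℝ) < 1 - (q ^ 2) ^ (n + 1 - a) := by
    have := jtp_fac_pos hq0 hq1 (n - a); rwa [show n - a + 1 = n + 1 - a by omega] at this
  field_simp
  ring

lemma jtpB_qpascal (hq0 : 0 < q) (hq1 : q < 1) (n : ℕ) (k : ℤ) :
    jtpB q (2 * n + 2) k =
      (q ^ 2) ^ (2 * (n : ℤ) + 2 - k) * jtpB q (2 * n) (k - 2) +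
        (1 + (q ^ 2) ^ (2 * (n : ℤ) + 1)) * jtpB q (2 * n) (k - 1) +
        (q ^ 2) ^ k * jtpB q (2 * n) k := by
  have hQ : (q ^ 2 : ℝ) ≠ 0 := by positivity
  have hC := jtpB_pascal1 hq0 hq1 (2 * n + 1) k
  have hA := jtpB_pascal2 hq0 hq1 (2 * n) (k - 1)
  have hB := jtpB_pascal2 hq0 hq1 (2 * n) k
  rw [show 2 * n + 1 + 1 = 2 * n + 2 by ring] at hC
  rw [show k - 1 - 1 = k - 2 by ring,
    show ((2 * n : ℕ) : ℤ) + 1 - (k - 1) = 2 * (n : ℤ) + 2 - k by push_cast; ring] at hA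
  rw [show ((2 * n : ℕ) : ℤ) + 1 - k = 2 * (n : ℤ) + 1 - k by push_cast; ring] at hB
  have e5 : (q ^ 2) ^ k *
      ((q ^ 2) ^ (2 * (n : ℤ) + 1 - k) * jtpB q (2 * n) (k - 1) + jtpB q (2 * n) k) =
      (q ^ 2) ^ (2 * (n : ℤ) + 1) * jtpB q (2 * n) (k - 1) + (q ^ 2) ^ k * jtpB q (2 * n) k := by
    rw [mul_add, ← mul_assoc, ← zpow_add₀ hQ,
      show k + (2 * (n : ℤ) + 1 - k) = 2 * (n : ℤ) + 1 by ring]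
  rw [hC, hA, hB, e5]
  ring

end basic

section finite

variable {q : ℝ}

lemma jtp_finite (hq0 : 0 < q) (hq1 : q < 1) (N : ℕ) :
    ∑ j ∈ Finset.Icc (-(N : ℤ)) (N : ℤ),
        (-1 : ℝ) ^ j * jtpB q (2 * N) ((N : ℤ) + j) * q ^ (j ^ 2)
      = ∏ n ∈ Finset.range N, (1 - q ^ (2 * n + 1)) ^ 2 := by
  have hq : q ≠ 0 := ne_of_gt hq0
  have hm1 : (-1 : ℝ) ≠ 0 := by norm_num
  have hz : ∀ s t : ℤ, q ^ s * q ^ t = q ^ (s + t) := fun s t => (zpow_add₀ hq s t).symm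
  have hQz : ∀ m : ℤ, ((q ^ 2 : ℝ)) ^ m = q ^ (2 * m) := fun m => by
    rw [sq, mul_zpow, ← zpow_add₀ hq, two_mul]
  have sgn : ∀ i : ℤ, (-1 : ℝ) ^ (i + 1) = -((-1 : ℝ) ^ i) := fun i => by
    rw [zpow_add_one₀ hm1]; ring
  induction N with
  | zero => simp [jtpB_zero hq0 hq1]
  | succ N ih =>
    rw [Finset.prod_range_succ, ← ih]
    rw [show 2 * (N + 1) = 2 * N + 2 by ring]
    push_cast
    set g : ℤ → ℝ := fun i => (-1 : ℝ) ^ i * jtpB q (2 * N) ((N : ℤ) + i) * q ^ (i ^ 2) with hg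
    have step1 : ∀ j ∈ Finset.Icc (-((N : ℤ) + 1)) ((N : ℤ) + 1),
        (-1 : ℝ) ^ j * jtpB q (2 * N + 2) ((N : ℤ) + 1 + j) * q ^ (j ^ 2)
          = (-1 : ℝ) ^ j * ((q ^ 2) ^ ((N : ℤ) + 1 - j) * jtpB q (2 * N) ((N : ℤ) + (j - 1)))
              * q ^ (j ^ 2)
            + (-1 : ℝ) ^ j * ((1 + (q ^ 2) ^ (2 * (N : ℤ) + 1)) * jtpB q (2 * N) ((N : ℤ) + j))
              * q ^ (j ^ 2)
            + (-1 : ℝ) ^ j * ((q ^ 2) ^ ((N : ℤ) + 1 + j) * jtpB q (2 * N) ((N : ℤ) + (j + 1)))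
              * q ^ (j ^ 2) := by
      intro j _
      rw [jtpB_qpascal hq0 hq1 N ((N : ℤ) + 1 + j),
        show (N : ℤ) + 1 + j - 2 = (N : ℤ) + (j - 1) by ring,
        show (N : ℤ) + 1 + j - 1 = (N : ℤ) + j by ring,
        show 2 * (N : ℤ) + 2 - ((N : ℤ) + 1 + j) = (N : ℤ) + 1 - j by ring,
        show (N : ℤ) + 1 + j = (N : ℤ) + (j + 1) by ring]
      ring
    rw [Finset.sum_congr rfl step1, Finset.sum_add_distrib, Finset.sum_add_distrib]
    -- middle sum
    have midv : ∀ j ∈ Finset.Icc (-((N : ℤ) + 1)) ((N : ℤ) + 1) \ Finset.Icc (-(N : ℤ)) (N : ℤ),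
        (-1 : ℝ) ^ j * ((1 + (q ^ 2) ^ (2 * (N : ℤ) + 1)) * jtpB q (2 * N) ((N : ℤ) + j))
          * q ^ (j ^ 2) = 0 := by
      intro j hj
      simp only [Finset.mem_sdiff, Finset.mem_Icc] at hj
      have : jtpB q (2 * N) ((N : ℤ) + j) = 0 := by
        rcases lt_or_ge ((N : ℤ) + j) 0 with h | h
        · exact jtpB_neg h
        · refine jtpB_gt ?_
          push_cast
          omega
      rw [this]; ring
    have hsub : Finset.Icc (-(N : ℤ)) (N : ℤ) ⊆ Finset.Icc (-((N : ℤ) + 1)) ((N : ℤ) + 1) := by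
      apply Finset.Icc_subset_Icc <;> omega
    have mid : ∑ j ∈ Finset.Icc (-((N : ℤ) + 1)) ((N : ℤ) + 1),
        (-1 : ℝ) ^ j * ((1 + (q ^ 2) ^ (2 * (N : ℤ) + 1)) * jtpB q (2 * N) ((N : ℤ) + j))
          * q ^ (j ^ 2)
        = (1 + (q ^ 2) ^ (2 * (N : ℤ) + 1)) * ∑ j ∈ Finset.Icc (-(N : ℤ)) (N : ℤ), g j := by
      rw [← Finset.sum_subset hsub (fun j hj hj2 => midv j (Finset.mem_sdiff.2 ⟨hj, hj2⟩)),
        Finset.mul_sum]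
      refine Finset.sum_congr rfl fun j _ => ?_
      simp only [hg]; ring
    -- first sum
    have left : ∑ j ∈ Finset.Icc (-((N : ℤ) + 1)) ((N : ℤ) + 1),
        (-1 : ℝ) ^ j * ((q ^ 2) ^ ((N : ℤ) + 1 - j) * jtpB q (2 * N) ((N : ℤ) + (j - 1)))
          * q ^ (j ^ 2)
        = -q ^ (2 * (N : ℤ) + 1) * ∑ j ∈ Finset.Icc (-(N : ℤ)) (N : ℤ), g j := by
      rw [show ∑ j ∈ Finset.Icc (-((N : ℤ) + 1)) ((N : ℤ) + 1),
          (-1 : ℝ) ^ j * ((q ^ 2) ^ ((N : ℤ) + 1 - j) * jtpB q (2 * N) ((N : ℤ) + (j - 1)))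
            * q ^ (j ^ 2)
          = ∑ i ∈ Finset.Icc (-((N : ℤ) + 2)) (N : ℤ), -q ^ (2 * (N : ℤ) + 1) * g i from ?_]
      · rw [← Finset.sum_subset (Finset.Icc_subset_Icc (by omega) (by omega) :
            Finset.Icc (-(N : ℤ)) (N : ℤ) ⊆ Finset.Icc (-((N : ℤ) + 2)) (N : ℤ))
            (fun i hi hi2 => ?_), Finset.mul_sum]
        simp only [Finset.mem_Icc] at hi hi2
        have : jtpB q (2 * N) ((N : ℤ) + i) = 0 := jtpB_neg (by omega)
        simp only [hg, this]; ring
      · refine Finset.sum_nbij' (fun j => j - 1) (fun i => i + 1) ?_ ?_ ?_ ?_ ?_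
        · intro a ha; simp only [Finset.mem_Icc] at *; omega
        · intro a ha; simp only [Finset.mem_Icc] at *; omega
        · intro a _; ring
        · intro a _; ring
        · intro j _
          simp only [hg]
          rw [hQz, show (N : ℤ) + (j - 1) = (N : ℤ) + (j - 1) from rfl]
          have : (-1 : ℝ) ^ j = -((-1 : ℝ) ^ (j - 1)) := by
            rw [← sgn (j - 1), sub_add_cancel]
          rw [this]
          rw [mul_comm ((q:ℝ) ^ (2 * ((N : ℤ) + 1 - j))) (jtpB q (2 * N) ((N : ℤ) + (j - 1)))]
          have comb : (q : ℝ) ^ (2 * ((N : ℤ) + 1 - j)) * q ^ (j ^ 2)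
              = q ^ (2 * (N : ℤ) + 1) * q ^ ((j - 1) ^ 2) := by
            rw [hz, hz]; congr 1; ring
          calc -((-1:ℝ) ^ (j-1)) * (jtpB q (2*N) ((N:ℤ)+(j-1)) * q ^ (2*((N:ℤ)+1-j))) * q ^ (j^2)
              = -((-1:ℝ) ^ (j-1)) * jtpB q (2*N) ((N:ℤ)+(j-1))
                  * (q ^ (2*((N:ℤ)+1-j)) * q ^ (j^2)) := by ring
            _ = -q ^ (2*(N:ℤ)+1) * ((-1:ℝ) ^ (j-1) * jtpB q (2*N) ((N:ℤ)+(j-1))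
                  * q ^ ((j-1)^2)) := by rw [comb]; ring
    -- third sum
    have right : ∑ j ∈ Finset.Icc (-((N : ℤ) + 1)) ((N : ℤ) + 1),
        (-1 : ℝ) ^ j * ((q ^ 2) ^ ((N : ℤ) + 1 + j) * jtpB q (2 * N) ((N : ℤ) + (j + 1)))
          * q ^ (j ^ 2)
        = -q ^ (2 * (N : ℤ) + 1) * ∑ j ∈ Finset.Icc (-(N : ℤ)) (N : ℤ), g j := by
      rw [show ∑ j ∈ Finset.Icc (-((N : ℤ) + 1)) ((N : ℤ) + 1),
          (-1 : ℝ) ^ j * ((q ^ 2) ^ ((N : ℤ) + 1 + j) * jtpB q (2 * N) ((N : ℤ) + (j + 1)))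
            * q ^ (j ^ 2)
          = ∑ i ∈ Finset.Icc (-(N : ℤ)) ((N : ℤ) + 2), -q ^ (2 * (N : ℤ) + 1) * g i from ?_]
      · rw [← Finset.sum_subset (Finset.Icc_subset_Icc (by omega) (by omega) :
            Finset.Icc (-(N : ℤ)) (N : ℤ) ⊆ Finset.Icc (-(N : ℤ)) ((N : ℤ) + 2))
            (fun i hi hi2 => ?_), Finset.mul_sum]
        simp only [Finset.mem_Icc] at hi hi2
        have : jtpB q (2 * N) ((N : ℤ) + i) = 0 := jtpB_gt (by push_cast; omega)
        simp only [hg, this]; ring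
      · refine Finset.sum_nbij' (fun j => j + 1) (fun i => i - 1) ?_ ?_ ?_ ?_ ?_
        · intro a ha; simp only [Finset.mem_Icc] at *; omega
        · intro a ha; simp only [Finset.mem_Icc] at *; omega
        · intro a _; ring
        · intro a _; ring
        · intro j _
          simp only [hg]
          rw [hQz]
          have : (-1 : ℝ) ^ (j + 1) = -((-1 : ℝ) ^ j) := sgn j
          have comb : (q : ℝ) ^ (2 * ((N : ℤ) + 1 + j)) * q ^ (j ^ 2)
              = q ^ (2 * (N : ℤ) + 1) * q ^ ((j + 1) ^ 2) := by
            rw [hz, hz]; congr 1; ring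
          calc (-1:ℝ) ^ j * (q ^ (2*((N:ℤ)+1+j)) * jtpB q (2*N) ((N:ℤ)+(j+1))) * q ^ (j^2)
              = (-1:ℝ) ^ j * jtpB q (2*N) ((N:ℤ)+(j+1))
                  * (q ^ (2*((N:ℤ)+1+j)) * q ^ (j^2)) := by ring
            _ = (-1:ℝ) ^ j * jtpB q (2*N) ((N:ℤ)+(j+1))
                  * (q ^ (2*(N:ℤ)+1) * q ^ ((j+1)^2)) := by rw [comb]
            _ = -q ^ (2*(N:ℤ)+1) * ((-1:ℝ) ^ (j+1) * jtpB q (2*N) ((N:ℤ)+(j+1))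
                  * q ^ ((j+1)^2)) := by rw [this]; ring
    rw [left, mid, right]
    have scal : (1 : ℝ) + (q ^ 2) ^ (2 * (N : ℤ) + 1) - 2 * q ^ (2 * (N : ℤ) + 1)
        = (1 - q ^ (2 * N + 1)) ^ 2 := by
      rw [hQz]
      have e1 : (q : ℝ) ^ (2 * (2 * (N : ℤ) + 1)) = (q ^ (2 * N + 1 : ℕ)) ^ 2 := by
        rw [← pow_mul, ← zpow_natCast q ((2 * N + 1) * 2)]
        congr 1 <;> push_cast <;> ring
      have e2 : (q : ℝ) ^ (2 * (N : ℤ) + 1) = q ^ (2 * N + 1 : ℕ) := by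
        rw [← zpow_natCast q (2 * N + 1)]
        congr 1 <;> push_cast <;> ring
      rw [e1, e2]; ring
    rw [← scal]
    ring
end finite

section limit

variable {q : ℝ}

lemma abs_log_one_sub_le {x c : ℝ} (hx : 0 ≤ x) (hxc : x ≤ c) (hc : c < 1) :
    |Real.log (1 - x)| ≤ x / (1 - c) := by
  have h1 : (0:ℝ) < 1 - c := by linarith
  have h2 : (0:ℝ) < 1 - x := by linarith
  have h3 : Real.log (1 - x) ≤ 0 := Real.log_nonpos (by linarith) (by linarith)
  rw [abs_of_nonpos h3, ← Real.log_inv]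
  have h5 : Real.log (1 - x)⁻¹ ≤ (1 - x)⁻¹ - 1 :=
    Real.log_le_sub_one_of_pos (by positivity)
  have h6 : (1 - x)⁻¹ - 1 = x / (1 - x) := by field_simp; ring
  calc Real.log (1 - x)⁻¹ ≤ (1 - x)⁻¹ - 1 := h5
    _ = x / (1 - x) := h6
    _ ≤ x / (1 - c) := by gcongr

lemma jtp_log_summable1 (hq0 : 0 < q) (hq1 : q < 1) :
    Summable fun n : ℕ => Real.log (1 - (q ^ 2) ^ (n + 1)) := by
  have hQ0 : (0:ℝ) ≤ q ^ 2 := sq_nonneg q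
  have hQ1 : q ^ 2 < 1 := by nlinarith
  refine Summable.of_norm_bounded (g := fun n => (q ^ 2) ^ (n + 1) / (1 - q ^ 2)) ?_ fun n => ?_
  · exact (((summable_geometric_of_lt_one hQ0 hQ1).mul_left (q ^ 2)).congr
      (fun n => by rw [← pow_succ'])).div_const _
  · rw [Real.norm_eq_abs]
    exact abs_log_one_sub_le (by positivity) (pow_le_of_le_one hQ0 hQ1.le (Nat.succ_ne_zero n))
      hQ1

lemma jtp_log_summable2 (hq0 : 0 < q) (hq1 : q < 1) :
    Summable fun n : ℕ => Real.log (1 - q ^ (2 * n + 1)) := by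
  refine Summable.of_norm_bounded (g := fun n => q ^ (2 * n + 1) / (1 - q)) ?_ fun n => ?_
  · have : Summable fun n : ℕ => q ^ (2 * n + 1) := by
      have hQ0 : (0:ℝ) ≤ q ^ 2 := sq_nonneg q
      have hQ1 : q ^ 2 < 1 := by nlinarith
      exact ((summable_geometric_of_lt_one hQ0 hQ1).mul_left q).congr
        (fun n => by rw [← pow_mul, ← pow_succ'])
    exact this.div_const _
  · rw [Real.norm_eq_abs]
    exact abs_log_one_sub_le (by positivity)
      (pow_le_of_le_one hq0.le hq1.le (Nat.succ_ne_zero _)) hq1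

lemma jtpD_exp (hq0 : 0 < q) (hq1 : q < 1) (m : ℕ) :
    jtpD q m = Real.exp (∑ i ∈ Finset.range m, Real.log (1 - (q ^ 2) ^ (i + 1))) := by
  rw [Real.exp_sum]
  exact Finset.prod_congr rfl fun i _ => (Real.exp_log (jtp_fac_pos hq0 hq1 i)).symm

lemma jtpD_tendsto (hq0 : 0 < q) (hq1 : q < 1) :
    Filter.Tendsto (jtpD q) Filter.atTop
      (nhds (Real.exp (∑' n : ℕ, Real.log (1 - (q ^ 2) ^ (n + 1))))) := by
  have h := (Real.continuous_exp.tendsto _).comp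
    ((jtp_log_summable1 hq0 hq1).hasSum.tendsto_sum_nat)
  exact h.congr fun m => (jtpD_exp hq0 hq1 m).symm

lemma jtpD_ge (hq0 : 0 < q) (hq1 : q < 1) (m : ℕ) :
    Real.exp (∑' n : ℕ, Real.log (1 - (q ^ 2) ^ (n + 1))) ≤ jtpD q m := by
  rw [jtpD_exp hq0 hq1 m, Real.exp_le_exp]
  have h := Summable.sum_le_tsum (f := fun n : ℕ => -Real.log (1 - (q ^ 2) ^ (n + 1)))
    (Finset.range m) (fun i _ => ?_) ((jtp_log_summable1 hq0 hq1).neg)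
  · rw [tsum_neg] at h
    simp only [Finset.sum_neg_distrib] at h
    linarith
  · show (0:ℝ) ≤ -Real.log (1 - (q ^ 2) ^ (i + 1))
    have h1 : 1 - (q ^ 2) ^ (i + 1) ≤ 1 := by
      have : (0:ℝ) < (q ^ 2) ^ (i + 1) := by positivity
      linarith
    have := Real.log_nonpos (le_of_lt (jtp_fac_pos hq0 hq1 i)) h1
    linarith

lemma jtpB_nonneg (hq0 : 0 < q) (hq1 : q < 1) (n : ℕ) (k : ℤ) : 0 ≤ jtpB q n k := by
  rw [jtpB]
  split
  · exact le_of_lt (div_pos (jtpD_pos hq0 hq1 _)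
      (mul_pos (jtpD_pos hq0 hq1 _) (jtpD_pos hq0 hq1 _)))
  · exact le_refl 0

lemma jtpB_le (hq0 : 0 < q) (hq1 : q < 1) (n : ℕ) (k : ℤ) :
    jtpB q n k ≤ 1 / (Real.exp (∑' n : ℕ, Real.log (1 - (q ^ 2) ^ (n + 1))) *
      Real.exp (∑' n : ℕ, Real.log (1 - (q ^ 2) ^ (n + 1)))) := by
  set d := Real.exp (∑' n : ℕ, Real.log (1 - (q ^ 2) ^ (n + 1))) with hd
  have hdpos : 0 < d := Real.exp_pos _
  rw [jtpB]
  split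
  · refine div_le_div₀ (by positivity) (jtpD_le_one hq0 hq1 n) (by positivity) ?_
    exact mul_le_mul (jtpD_ge hq0 hq1 _) (jtpD_ge hq0 hq1 _) hdpos.le
      (le_trans hdpos.le (jtpD_ge hq0 hq1 _))
  · positivity

lemma jtp_zpow_natAbs (hq0 : 0 < q) (j : ℤ) : (q : ℝ) ^ (j ^ 2) = q ^ (j.natAbs ^ 2) := by
  rw [← zpow_natCast q (j.natAbs ^ 2)]
  congr 1
  push_cast
  rw [sq_abs]

lemma jtp_sq_summable (hq0 : 0 < q) (hq1 : q < 1) :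
    Summable fun j : ℤ => (q : ℝ) ^ (j.natAbs ^ 2) := by
  refine Summable.of_nat_of_neg ?_ ?_ <;>
  · simp only [Int.natAbs_neg, Int.natAbs_natCast]
    refine Summable.of_nonneg_of_le (fun n => by positivity) (fun n => ?_)
      (summable_geometric_of_lt_one hq0.le hq1)
    exact pow_le_pow_of_le_one hq0.le hq1.le (Nat.le_self_pow two_ne_zero n)

lemma jtpB_tendsto (hq0 : 0 < q) (hq1 : q < 1) (j : ℤ) :
    Filter.Tendsto (fun N : ℕ => jtpB q (2 * N) ((N : ℤ) + j)) Filter.atTop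
      (nhds ((Real.exp (∑' n : ℕ, Real.log (1 - (q ^ 2) ^ (n + 1)))) /
        (Real.exp (∑' n : ℕ, Real.log (1 - (q ^ 2) ^ (n + 1))) *
          Real.exp (∑' n : ℕ, Real.log (1 - (q ^ 2) ^ (n + 1)))))) := by
  set d := Real.exp (∑' n : ℕ, Real.log (1 - (q ^ 2) ^ (n + 1))) with hd
  have hdpos : 0 < d := Real.exp_pos _
  have hje := Int.natAbs_eq j
  have hD := jtpD_tendsto hq0 hq1
  have t1 : Filter.Tendsto (fun N : ℕ => jtpD q (2 * N)) Filter.atTop (nhds d) :=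
    hD.comp (Filter.tendsto_atTop_atTop.2 fun b => ⟨b, fun n hn => by omega⟩)
  have t2 : Filter.Tendsto (fun N : ℕ => jtpD q ((N : ℤ) + j).toNat) Filter.atTop (nhds d) := by
    refine hD.comp (Filter.tendsto_atTop_atTop.2 fun b => ⟨b + j.natAbs, fun n hn => ?_⟩)
    omega
  have t3 : Filter.Tendsto (fun N : ℕ => jtpD q (2 * N - ((N : ℤ) + j).toNat)) Filter.atTop
      (nhds d) := by
    refine hD.comp (Filter.tendsto_atTop_atTop.2 fun b => ⟨b + j.natAbs, fun n hn => ?_⟩)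
    omega
  have := t1.div (t2.mul t3) (by positivity)
  refine Filter.Tendsto.congr' ?_ this
  filter_upwards [Filter.eventually_ge_atTop j.natAbs] with N hN
  have hN' : (j.natAbs : ℤ) ≤ (N : ℤ) := by exact_mod_cast hN
  rw [jtpB, if_pos ⟨by omega, by push_cast; omega⟩]
  rfl

lemma jtp_infinite (hq0 : 0 < q) (hq1 : q < 1) :
    (∑' j : ℤ, (-1 : ℝ) ^ j * q ^ (j ^ 2)) =
      Real.exp (∑' n : ℕ, Real.log (1 - (q ^ 2) ^ (n + 1))) *
        Real.exp (∑' n : ℕ, 2 * Real.log (1 - q ^ (2 * n + 1))) := by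
  set d := Real.exp (∑' n : ℕ, Real.log (1 - (q ^ 2) ^ (n + 1))) with hd
  set p := Real.exp (∑' n : ℕ, 2 * Real.log (1 - q ^ (2 * n + 1))) with hp
  have hdpos : 0 < d := Real.exp_pos _
  have hppos : 0 < p := Real.exp_pos _
  -- dominated convergence
  have hFt : Filter.Tendsto
      (fun N : ℕ => ∑' j : ℤ, ((-1 : ℝ) ^ j * jtpB q (2 * N) ((N : ℤ) + j) * q ^ (j ^ 2)))
      Filter.atTop (nhds (∑' j : ℤ, ((-1 : ℝ) ^ j * (d / (d * d)) * q ^ (j ^ 2)))) := by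
    refine tendsto_tsum_of_dominated_convergence
      (bound := fun j : ℤ => (1 / (d * d)) * q ^ (j.natAbs ^ 2)) ?_ ?_ ?_
    · exact (jtp_sq_summable hq0 hq1).mul_left _
    · intro j
      exact ((jtpB_tendsto hq0 hq1 j).const_mul ((-1 : ℝ) ^ j)).mul_const (q ^ (j ^ 2))
    · filter_upwards with N j
      have habs : |(-1 : ℝ) ^ j| = 1 := by
        rcases Int.even_or_odd j with h | h
        · rw [h.neg_one_zpow, abs_one]
        · rw [h.neg_one_zpow, abs_neg, abs_one]
      rw [Real.norm_eq_abs, abs_mul, abs_mul, habs, one_mul,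
        abs_of_nonneg (jtpB_nonneg hq0 hq1 _ _), jtp_zpow_natAbs hq0,
        abs_of_nonneg (by positivity : (0:ℝ) ≤ q ^ (j.natAbs ^ 2))]
      exact mul_le_mul_of_nonneg_right (jtpB_le hq0 hq1 _ _) (by positivity)
  -- each tsum is the finite sum
  have heq : ∀ N : ℕ, (∑' j : ℤ, ((-1 : ℝ) ^ j * jtpB q (2 * N) ((N : ℤ) + j) * q ^ (j ^ 2)))
      = ∑ j ∈ Finset.Icc (-(N : ℤ)) (N : ℤ),
          (-1 : ℝ) ^ j * jtpB q (2 * N) ((N : ℤ) + j) * q ^ (j ^ 2) := by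
    intro N
    refine tsum_eq_sum fun j hj => ?_
    simp only [Finset.mem_Icc, not_and_or, not_le] at hj
    have : jtpB q (2 * N) ((N : ℤ) + j) = 0 := by
      rcases hj with h | h
      · exact jtpB_neg (by omega)
      · exact jtpB_gt (by push_cast; omega)
    rw [this]; ring
  -- product side
  have hPt : Filter.Tendsto
      (fun N : ℕ => ∏ n ∈ Finset.range N, (1 - q ^ (2 * n + 1)) ^ 2)
      Filter.atTop (nhds p) := by
    have hrep : ∀ N : ℕ, ∏ n ∈ Finset.range N, (1 - q ^ (2 * n + 1)) ^ 2
        = Real.exp (∑ n ∈ Finset.range N, 2 * Real.log (1 - q ^ (2 * n + 1))) := by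
      intro N
      rw [Real.exp_sum]
      refine Finset.prod_congr rfl fun n _ => ?_
      have hpos : 0 < 1 - q ^ (2 * n + 1) := by
        have : q ^ (2 * n + 1) < 1 := pow_lt_one₀ hq0.le hq1 (Nat.succ_ne_zero _)
        linarith
      rw [show (2:ℝ) * Real.log (1 - q ^ (2*n+1))
            = Real.log (1 - q ^ (2*n+1)) + Real.log (1 - q ^ (2*n+1)) by ring,
          Real.exp_add, Real.exp_log hpos, sq]
    have h := (Real.continuous_exp.tendsto _).comp
      (((jtp_log_summable2 hq0 hq1).mul_left 2).hasSum.tendsto_sum_nat)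
    exact h.congr fun N => (hrep N).symm
  have huniq : (∑' j : ℤ, ((-1 : ℝ) ^ j * (d / (d * d)) * q ^ (j ^ 2))) = p := by
    refine tendsto_nhds_unique ?_ hPt
    refine (hFt.congr fun N => ?_).congr fun N => (jtp_finite hq0 hq1 N)
    exact heq N
  have hre : (∑' j : ℤ, ((-1 : ℝ) ^ j * (d / (d * d)) * q ^ (j ^ 2)))
      = (∑' j : ℤ, (-1 : ℝ) ^ j * q ^ (j ^ 2)) * (d / (d * d)) := by
    rw [← tsum_mul_right]
    exact tsum_congr fun j => by ring
  rw [hre] at huniq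
  have hdd : d / (d * d) = 1 / d := by field_simp
  rw [hdd] at huniq
  have : (∑' j : ℤ, (-1 : ℝ) ^ j * q ^ (j ^ 2)) = p * d := by
    field_simp at huniq
    linarith [huniq]
  rw [this]; ring

end limit

section analytic

lemma hasDerivAt_log_one_sub_exp {a t : ℝ} (ha : 0 < a) (ht : 0 < t) :
    HasDerivAt (fun s : ℝ => Real.log (1 - Real.exp (-(a * s))))
      (a / (Real.exp (a * t) - 1)) t := by
  have h1 : HasDerivAt (fun s : ℝ => -(a * s)) (-a) t := by
    simpa [Pi.neg_def] using ((hasDerivAt_id t).const_mul a).neg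
  have h2 := h1.exp
  have h3 := h2.const_sub 1
  have hlt : Real.exp (-(a * t)) < 1 := by
    rw [Real.exp_lt_one_iff]; nlinarith
  have h0 : 0 < 1 - Real.exp (-(a * t)) := by linarith
  have h4 := h3.log (ne_of_gt h0)
  have key : Real.exp (a * t) * Real.exp (-(a * t)) = 1 := by
    rw [← Real.exp_add]; simp
  have h1' : 0 < Real.exp (a * t) - 1 := by nlinarith [Real.exp_pos (a * t)]
  have hval : -(Real.exp (-(a * t)) * -a) / (1 - Real.exp (-(a * t)))
      = a / (Real.exp (a * t) - 1) := by
    rw [div_eq_div_iff (ne_of_gt h0) (ne_of_gt h1')]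
    linear_combination a * key
  rw [hval] at h4
  exact h4

lemma jtp_one_le_exp_mul {b y : ℝ} (hb : 0 < b) (hy : 0 < y) (a : ℝ) (n : ℕ)
    (hab : b * ((n : ℝ) + 1) ≤ a) :
    1 ≤ Real.exp (a * y) * (Real.exp (-(b * y))) ^ (n + 1) := by
  have e1 : (Real.exp (-(b * y))) ^ (n + 1) = Real.exp (((n : ℝ) + 1) * (-(b * y))) := by
    rw [← Real.exp_nat_mul]; congr 1; push_cast; ring
  rw [e1, ← Real.exp_add]
  calc (1 : ℝ) = Real.exp 0 := Real.exp_zero.symm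
    _ ≤ Real.exp (a * y + ((n : ℝ) + 1) * (-(b * y))) := by
        rw [Real.exp_le_exp]
        nlinarith

lemma jtp_sumlog_hasDeriv (a : ℕ → ℝ) (b : ℝ) (hb : 0 < b)
    (hab : ∀ n : ℕ, b * ((n : ℝ) + 1) ≤ a n)
    (hA : ∀ n : ℕ, a n ≤ 3 * b * ((n : ℝ) + 1)) {y : ℝ} (hy : 0 < y) :
    Summable (fun n : ℕ => a n / (Real.exp (a n * y) - 1)) ∧
      HasDerivAt (fun t : ℝ => ∑' n : ℕ, Real.log (1 - Real.exp (-(a n * t))))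
        (∑' n : ℕ, a n / (Real.exp (a n * y) - 1)) y := by
  have hapos : ∀ n, 0 < a n := fun n => lt_of_lt_of_le (by positivity) (hab n)
  have hy2 : 0 < y / 2 := by linarith
  set r := Real.exp (-(b * (y / 2))) with hr
  have hr0 : 0 < r := Real.exp_pos _
  have hr1 : r < 1 := by rw [hr, Real.exp_lt_one_iff]; nlinarith
  set u : ℕ → ℝ := fun n => 3 * b * ((n : ℝ) + 1) * r ^ (n + 1) / (1 - r) with hu_def
  have hu : Summable u := by
    have s1 : Summable (fun n : ℕ => ((n : ℝ)) * r ^ n) := by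
      simpa using summable_pow_mul_geometric_of_norm_lt_one 1
        (by rwa [Real.norm_eq_abs, abs_of_pos hr0] : ‖r‖ < 1)
    have s2 : Summable (fun n : ℕ => r ^ n) := summable_geometric_of_lt_one hr0.le hr1
    have s3 : Summable (fun n : ℕ => ((n : ℝ) + 1) * r ^ (n + 1)) := by
      refine Summable.of_nonneg_of_le (fun n => by positivity) (fun n => ?_) (s1.add s2)
      have hrn : r ^ (n + 1) ≤ r ^ n := pow_le_pow_of_le_one hr0.le hr1.le (by omega)
      have h1 : ((n : ℝ)) * r ^ (n + 1) ≤ (n : ℝ) * r ^ n :=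
        mul_le_mul_of_nonneg_left hrn (by positivity)
      nlinarith [pow_nonneg hr0.le (n + 1)]
    exact ((s3.mul_left (3 * b)).div_const (1 - r)).congr fun n => by
      simp only [hu_def]; ring
  -- the derivative bound on Ioi (y/2)
  have hbound : ∀ (n : ℕ), ∀ t ∈ Set.Ioi (y / 2), ‖a n / (Real.exp (a n * t) - 1)‖ ≤ u n := by
    intro n t ht
    have ht' : y / 2 < t := ht
    have ht0 : 0 < t := lt_trans hy2 ht'
    have hE2 : (1:ℝ) < Real.exp (a n * (y / 2)) := by
      rw [Real.one_lt_exp_iff]; exact mul_pos (hapos n) hy2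
    have hE2' : 0 < Real.exp (a n * (y / 2)) - 1 := by linarith
    have hEt : (1:ℝ) < Real.exp (a n * t) := by
      rw [Real.one_lt_exp_iff]; exact mul_pos (hapos n) ht0
    have hmono : Real.exp (a n * (y / 2)) - 1 ≤ Real.exp (a n * t) - 1 := by
      have : a n * (y / 2) ≤ a n * t := by
        exact mul_le_mul_of_nonneg_left (le_of_lt ht') (hapos n).le
      have := Real.exp_le_exp.2 this
      linarith
    rw [Real.norm_eq_abs, abs_of_pos (div_pos (hapos n) (by linarith : (0:ℝ) < Real.exp (a n * t) - 1))]
    have step1 : a n / (Real.exp (a n * t) - 1) ≤ a n / (Real.exp (a n * (y / 2)) - 1) := by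
      gcongr
      exact (hapos n).le
    refine le_trans step1 ?_
    have hxr : 1 ≤ Real.exp (a n * (y / 2)) * r ^ (n + 1) :=
      jtp_one_le_exp_mul hb hy2 (a n) n (hab n)
    have hrr : r ^ (n + 1) ≤ r := by
      calc r ^ (n + 1) ≤ r ^ 1 := pow_le_pow_of_le_one hr0.le hr1.le (by omega)
        _ = r := pow_one r
    have hEr : 1 - r ≤ r ^ (n + 1) * (Real.exp (a n * (y / 2)) - 1) := by nlinarith
    rw [hu_def]
    rw [div_le_div_iff₀ hE2' (by linarith : (0:ℝ) < 1 - r)]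
    calc a n * (1 - r) ≤ (3 * b * ((n : ℝ) + 1)) * (1 - r) := by
          have := hA n
          have h1r : (0:ℝ) ≤ 1 - r := by linarith
          exact mul_le_mul_of_nonneg_right this h1r
      _ ≤ (3 * b * ((n : ℝ) + 1)) * (r ^ (n + 1) * (Real.exp (a n * (y / 2)) - 1)) := by
          have h3b : (0:ℝ) ≤ 3 * b * ((n : ℝ) + 1) := by positivity
          exact mul_le_mul_of_nonneg_left hEr h3b
      _ = 3 * b * ((n : ℝ) + 1) * r ^ (n + 1) * (Real.exp (a n * (y / 2)) - 1) := by ring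
  -- summability of the series at the point y
  have hg0 : Summable (fun n : ℕ => Real.log (1 - Real.exp (-(a n * y)))) := by
    set c := Real.exp (-(b * y)) with hc
    have hc0 : 0 < c := Real.exp_pos _
    have hc1 : c < 1 := by rw [hc, Real.exp_lt_one_iff]; nlinarith
    refine Summable.of_norm_bounded (g := fun n => c ^ n / (1 - c)) ?_ fun n => ?_
    · exact (summable_geometric_of_lt_one hc0.le hc1).div_const _
    · rw [Real.norm_eq_abs]
      have hxn : Real.exp (-(a n * y)) ≤ c ^ (n + 1) := by
        have e1 : c ^ (n + 1) = Real.exp (((n : ℝ) + 1) * (-(b * y))) := by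
          rw [hc, ← Real.exp_nat_mul]; congr 1; push_cast; ring
        rw [e1, Real.exp_le_exp]
        nlinarith [hab n]
      have hxc : Real.exp (-(a n * y)) ≤ c := by
        refine le_trans hxn ?_
        calc c ^ (n + 1) ≤ c ^ 1 := pow_le_pow_of_le_one hc0.le hc1.le (by omega)
          _ = c := pow_one c
      refine le_trans (abs_log_one_sub_le (Real.exp_pos _).le hxc hc1) ?_
      have hcc : c ^ (n + 1) ≤ c ^ n := pow_le_pow_of_le_one hc0.le hc1.le (by omega)
      have hfin : Real.exp (-(a n * y)) ≤ c ^ n := le_trans hxn hcc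
      exact (div_le_div_iff_of_pos_right (by linarith : (0:ℝ) < 1 - c)).2 hfin
  constructor
  · refine Summable.of_norm_bounded (g := u) hu fun n => ?_
    exact hbound n y (by simpa using (by linarith : y / 2 < y))
  · exact hasDerivAt_tsum_of_isPreconnected hu isOpen_Ioi isPreconnected_Ioi
      (fun n t ht => hasDerivAt_log_one_sub_exp (hapos n) (lt_trans hy2 ht))
      hbound (by simpa using (by linarith : y / 2 < y)) hg0
      (by simpa using (by linarith : y / 2 < y))

end analytic


/-- The Jacobi theta function ϑ₄, defined for real `y` by
`ϑ₄(y) = ∑_{k ∈ ℤ} (−1)^k e^{−π k² y}`. -/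
noncomputable def theta4 (y : ℝ) : ℝ :=
  ∑' k : ℤ, (-1 : ℝ) ^ k * Real.exp (-Real.pi * (k : ℝ) ^ 2 * y)

section main

open Real

lemma theta4_eq_prodform {t : ℝ} (ht : 0 < t) :
    theta4 t =
      Real.exp (∑' n : ℕ, Real.log (1 - Real.exp (-((2 * (n : ℝ) + 2) * Real.pi * t)))) *
        Real.exp (∑' n : ℕ, Real.log (1 - Real.exp (-((2 * (n : ℝ) + 1) * Real.pi * t)))) ^ 2 := by
  set q := Real.exp (-(Real.pi * t)) with hq
  have hq0 : 0 < q := Real.exp_pos _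
  have hq1 : q < 1 := by
    rw [hq, Real.exp_lt_one_iff]
    nlinarith [Real.pi_pos]
  have h := jtp_infinite hq0 hq1
  -- identify theta4 with the zpow sum
  have htheta : theta4 t = ∑' j : ℤ, (-1 : ℝ) ^ j * q ^ (j ^ 2) := by
    refine tsum_congr fun k => ?_
    congr 1
    rw [jtp_zpow_natAbs hq0, hq, ← Real.exp_nat_mul]
    congr 1
    push_cast [Nat.cast_natAbs]
    rw [sq_abs]
    ring
  -- identify the even-part exponent
  have he1 : ∀ n : ℕ, (q ^ 2) ^ (n + 1) = Real.exp (-((2 * (n : ℝ) + 2) * Real.pi * t)) := by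
    intro n
    rw [← pow_mul, hq, ← Real.exp_nat_mul]
    congr 1
    push_cast
    ring
  have he2 : ∀ n : ℕ, q ^ (2 * n + 1) = Real.exp (-((2 * (n : ℝ) + 1) * Real.pi * t)) := by
    intro n
    rw [hq, ← Real.exp_nat_mul]
    congr 1
    push_cast
    ring
  rw [htheta, h]
  congr 1
  · congr 1
    exact tsum_congr fun n => by rw [he1 n]
  · rw [show (∑' n : ℕ, 2 * Real.log (1 - q ^ (2 * n + 1)))
        = 2 * ∑' n : ℕ, Real.log (1 - q ^ (2 * n + 1)) from tsum_mul_left]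
    rw [show (2 : ℝ) * ∑' n : ℕ, Real.log (1 - q ^ (2 * n + 1))
        = (∑' n : ℕ, Real.log (1 - q ^ (2 * n + 1)))
          + ∑' n : ℕ, Real.log (1 - q ^ (2 * n + 1)) by ring, Real.exp_add, sq]
    congr 1 <;>
    · congr 1
      exact tsum_congr fun n => by rw [he2 n]

theorem theta4_log_deriv_series (y : ℝ) (hy : 0 < y) :
    y ^ 2 * deriv theta4 y / theta4 y =
      2 * y ^ 2 * ∑' n : ℕ,
        ((n + 1) * Real.pi / (Real.exp (2 * (n + 1) * Real.pi * y) - 1) +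
          (2 * (n + 1) - 1) * Real.pi /
            (Real.exp ((2 * (n + 1) - 1) * Real.pi * y) - 1)) := by
  have hpi := Real.pi_pos
  set a₁ : ℕ → ℝ := fun n => (2 * (n : ℝ) + 2) * Real.pi with ha₁
  set a₂ : ℕ → ℝ := fun n => (2 * (n : ℝ) + 1) * Real.pi with ha₂
  obtain ⟨hs₁, hd₁⟩ := jtp_sumlog_hasDeriv a₁ (2 * Real.pi) (by positivity)
    (fun n => by simp only [ha₁]; nlinarith [Nat.cast_nonneg (α := ℝ) n])
    (fun n => by simp only [ha₁]; nlinarith [Nat.cast_nonneg (α := ℝ) n]) hy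
  obtain ⟨hs₂, hd₂⟩ := jtp_sumlog_hasDeriv a₂ Real.pi hpi
    (fun n => by simp only [ha₂]; nlinarith [Nat.cast_nonneg (α := ℝ) n])
    (fun n => by simp only [ha₂]; nlinarith [Nat.cast_nonneg (α := ℝ) n]) hy
  set V₁ : ℝ → ℝ := fun t => ∑' n : ℕ, Real.log (1 - Real.exp (-(a₁ n * t))) with hV₁
  set V₂ : ℝ → ℝ := fun t => ∑' n : ℕ, Real.log (1 - Real.exp (-(a₂ n * t))) with hV₂
  set S₁ : ℝ := ∑' n : ℕ, a₁ n / (Real.exp (a₁ n * y) - 1) with hS₁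
  set S₂ : ℝ := ∑' n : ℕ, a₂ n / (Real.exp (a₂ n * y) - 1) with hS₂
  set F : ℝ → ℝ := fun t => Real.exp (V₁ t) * Real.exp (V₂ t) ^ 2 with hF
  -- theta4 agrees with F on a neighbourhood of y
  have hEq : ∀ᶠ t in nhds y, theta4 t = F t := by
    filter_upwards [Ioi_mem_nhds hy] with t ht
    have := theta4_eq_prodform (t := t) ht
    simpa [hF, hV₁, hV₂, ha₁, ha₂] using this
  -- derivative of F
  have e1 := hd₁.exp
  have e2 := (hd₂.exp).pow 2
  have hFd : HasDerivAt F
      (Real.exp (V₁ y) * S₁ * Real.exp (V₂ y) ^ 2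
        + Real.exp (V₁ y) * (2 * Real.exp (V₂ y) ^ 1 * (Real.exp (V₂ y) * S₂))) y :=
    e1.mul e2
  have hderiv : deriv theta4 y = Real.exp (V₁ y) * S₁ * Real.exp (V₂ y) ^ 2
      + Real.exp (V₁ y) * (2 * Real.exp (V₂ y) ^ 1 * (Real.exp (V₂ y) * S₂)) := by
    rw [Filter.EventuallyEq.deriv_eq (hEq : theta4 =ᶠ[nhds y] F), hFd.deriv]
  have hth : theta4 y = F y := Filter.EventuallyEq.eq_of_nhds (hEq : theta4 =ᶠ[nhds y] F)
  rw [hderiv, hth]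
  -- simplify the left-hand side
  have hT : F y = Real.exp (V₁ y) * Real.exp (V₂ y) ^ 2 := rfl
  have hTpos : 0 < F y := by rw [hT]; positivity
  have hlhs : y ^ 2 * (Real.exp (V₁ y) * S₁ * Real.exp (V₂ y) ^ 2
      + Real.exp (V₁ y) * (2 * Real.exp (V₂ y) ^ 1 * (Real.exp (V₂ y) * S₂))) / F y
      = y ^ 2 * (S₁ + 2 * S₂) := by
    rw [hT]
    field_simp
  rw [hlhs]
  -- identify the right-hand side series
  set g₁ : ℕ → ℝ := fun n =>
    ((n : ℝ) + 1) * Real.pi / (Real.exp (2 * ((n : ℝ) + 1) * Real.pi * y) - 1) with hg₁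
  set g₂ : ℕ → ℝ := fun n =>
    (2 * ((n : ℝ) + 1) - 1) * Real.pi /
      (Real.exp ((2 * ((n : ℝ) + 1) - 1) * Real.pi * y) - 1) with hg₂
  have hS₁g : S₁ = 2 * ∑' n, g₁ n := by
    rw [hS₁, ← tsum_mul_left]
    refine tsum_congr fun n => ?_
    simp only [hg₁, ha₁]
    rw [show (2 * (n : ℝ) + 2) * Real.pi * y = 2 * ((n : ℝ) + 1) * Real.pi * y by ring]
    ring
  have hS₂g : S₂ = ∑' n, g₂ n := by
    rw [hS₂]
    refine tsum_congr fun n => ?_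
    simp only [hg₂, ha₂]
    rw [show (2 * ((n : ℝ) + 1) - 1) * Real.pi * y = (2 * (n : ℝ) + 1) * Real.pi * y by ring]
    ring_nf
  have hsum₁ : Summable g₁ := by
    refine (hs₁.div_const 2).congr fun n => ?_
    simp only [hg₁, ha₁]
    rw [show (2 * (n : ℝ) + 2) * Real.pi * y = 2 * ((n : ℝ) + 1) * Real.pi * y by ring]
    ring
  have hsum₂ : Summable g₂ := by
    refine hs₂.congr fun n => ?_
    simp only [hg₂, ha₂]
    rw [show (2 * ((n : ℝ) + 1) - 1) * Real.pi * y = (2 * (n : ℝ) + 1) * Real.pi * y by ring]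
    ring_nf
  have hRHS : (∑' n : ℕ, (((n : ℝ) + 1) * Real.pi /
      (Real.exp (2 * ((n : ℝ) + 1) * Real.pi * y) - 1) +
        (2 * ((n : ℝ) + 1) - 1) * Real.pi /
          (Real.exp ((2 * ((n : ℝ) + 1) - 1) * Real.pi * y) - 1)))
      = (∑' n, g₁ n) + ∑' n, g₂ n := by
    rw [← Summable.tsum_add hsum₁ hsum₂]
  rw [hRHS, hS₁g, hS₂g]
  ring

end main
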